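/- Suppose ψ, ψ_1, …, ψ_Ñ : [0, T̃] → ℋ are differentiable curves satisfying i dψ/dt = H_D(t) ψ(t) and i dψ_k/dt = (E P_k + H_D(t)) ψ_k(t) for each k, with common initial condition ψ(0) = ψ_k(0) = w_I for a unit vector w_I ∈ ℋ, and suppose additionally that each terminal state lies in its target subspace: ψ_k(T̃) ∈ L_k for every k = 1, …, Ñ. Then T̃ ≥ (1 − Ñ^{−1/2}) √Ñ / E. In particular, any such driven Hamiltonian search of ℓ marked objects among N requires time at least of order (1/E)√(N/ℓ). -/

import Mathlib

open scoped BigOperators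
noncomputable section

-- norm conservation aux lemma
lemma aux_norm_const {F : Type*} [NormedAddCommGroup F] [InnerProductSpace ℂ F] {T : ℝ}
    (φ v : ℝ → F)
    (hd : ∀ t ∈ Set.Icc (0:ℝ) T, HasDerivAt φ (v t) t)
    (hre : ∀ t ∈ Set.Icc (0:ℝ) T, (inner ℂ (φ t) (v t) : ℂ).re = 0) :
    ∀ t ∈ Set.Icc (0:ℝ) T, ‖φ t‖ = ‖φ 0‖ := by
  intro t ht
  set f : ℝ → ℝ := fun t => (inner ℂ (φ t) (φ t) : ℂ).re with hf
  have hdf : ∀ x ∈ Set.Icc (0:ℝ) T, HasDerivAt f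
      ((inner ℂ (φ x) (v x) : ℂ) + (inner ℂ (v x) (φ x) : ℂ)).re x := by
    intro x hx
    exact (Complex.reCLM.hasFDerivAt.comp_hasDerivAt x
      ((hd x hx).inner ℂ (hd x hx)))
  have hzero : ∀ x ∈ Set.Icc (0:ℝ) T,
      ((inner ℂ (φ x) (v x) : ℂ) + (inner ℂ (v x) (φ x) : ℂ)).re = 0 := by
    intro x hx
    have h1 : (inner ℂ (v x) (φ x) : ℂ) = starRingEnd ℂ (inner ℂ (φ x) (v x) : ℂ) :=
      (inner_conj_symm _ _).symm
    rw [Complex.add_re, h1, Complex.conj_re, hre x hx]; ring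
  have hconst : ∀ x ∈ Set.Icc (0:ℝ) T, f x = f 0 := by
    apply constant_of_has_deriv_right_zero
    · intro x hx
      exact ((hdf x hx).continuousAt.continuousWithinAt)
    · intro x hx
      have := hdf x (Set.mem_Icc.2 ⟨hx.1, hx.2.le⟩)
      rw [hzero x (Set.mem_Icc.2 ⟨hx.1, hx.2.le⟩)] at this
      exact this.hasDerivWithinAt
  have h1 : f t = ‖φ t‖ ^ 2 := by
    simpa [hf] using @inner_self_eq_norm_sq ℂ _ _ _ _ (φ t)
  have h2 : f 0 = ‖φ 0‖ ^ 2 := by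
    simpa [hf] using @inner_self_eq_norm_sq ℂ _ _ _ _ (φ 0)
  have := hconst t ht
  rw [h1, h2] at this
  calc ‖φ t‖ = Real.sqrt (‖φ t‖ ^ 2) := (Real.sqrt_sq (norm_nonneg _)).symm
      _ = Real.sqrt (‖φ 0‖ ^ 2) := by rw [this]
      _ = ‖φ 0‖ := Real.sqrt_sq (norm_nonneg _)

lemma aux_proj_formula {F : Type*} [NormedAddCommGroup F] [InnerProductSpace ℂ F]
    {ι : Type*} [Fintype ι] (v : ι → F) (hv : Orthonormal ℂ v)
    (K : Submodule ℂ F) [K.HasOrthogonalProjection]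
    (hK : K = Submodule.span ℂ (Set.range v)) (x : F) :
    (K.subtypeL.comp K.orthogonalProjectionOnto) x = ∑ i, (inner ℂ (v i) x : ℂ) • v i := by
  have hmem : (∑ i, (inner ℂ (v i) x : ℂ) • v i) ∈ K := by
    rw [hK]
    exact Submodule.sum_mem _ fun i _ =>
      Submodule.smul_mem _ _ (Submodule.subset_span ⟨i, rfl⟩)
  have hio : ∀ u ∈ K, (inner ℂ (x - ∑ i, (inner ℂ (v i) x : ℂ) • v i) u : ℂ) = 0 := by
    intro u hu
    rw [hK] at hu
    induction hu using Submodule.span_induction with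
    | mem u hu =>
      obtain ⟨j, rfl⟩ := hu
      rw [inner_sub_left, hv.inner_left_fintype, inner_conj_symm, sub_self]
    | zero => exact inner_zero_right _
    | add u₁ u₂ _ _ h1 h2 => rw [inner_add_right, h1, h2, add_zero]
    | smul c u _ h => rw [inner_smul_right, h, mul_zero]
  exact Submodule.eq_starProjection_of_mem_of_inner_eq_zero hmem hio

lemma aux_proj_norm_sq {F : Type*} [NormedAddCommGroup F] [InnerProductSpace ℂ F]
    {ι : Type*} [Fintype ι] (v : ι → F) (hv : Orthonormal ℂ v)
    (K : Submodule ℂ F) [K.HasOrthogonalProjection]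
    (hK : K = Submodule.span ℂ (Set.range v)) (x : F) :
    ‖(K.subtypeL.comp K.orthogonalProjectionOnto) x‖ ^ 2
      = ∑ i, ‖(inner ℂ (v i) x : ℂ)‖ ^ 2 := by
  rw [aux_proj_formula v hv K hK x]
  have h := hv.inner_sum (fun i => (inner ℂ (v i) x : ℂ)) (fun i => (inner ℂ (v i) x : ℂ)) Finset.univ
  have h2 : (‖∑ i, (inner ℂ (v i) x : ℂ) • v i‖ ^ 2 : ℝ)
      = RCLike.re ((inner ℂ (∑ i, (inner ℂ (v i) x : ℂ) • v i) (∑ i, (inner ℂ (v i) x : ℂ) • v i) : ℂ)) :=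
    (inner_self_eq_norm_sq _).symm
  rw [h2, h, map_sum]
  refine Finset.sum_congr rfl fun i _ => ?_
  rw [RCLike.conj_mul]
  simp [← Complex.ofReal_pow]

lemma aux_parseval {F : Type*} [NormedAddCommGroup F] [InnerProductSpace ℂ F]
    {ι : Type*} [Fintype ι] (w : ι → F) (hw : Orthonormal ℂ w)
    (hspan : Submodule.span ℂ (Set.range w) = ⊤) (x : F) :
    ∑ p, ‖(inner ℂ (w p) x : ℂ)‖ ^ 2 = ‖x‖ ^ 2 := by
  let b : OrthonormalBasis ι ℂ F := OrthonormalBasis.mk hw (le_of_eq hspan.symm)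
  have hb : ∀ p, (inner ℂ (w p) x : ℂ) = b.repr x p := by
    intro p
    rw [b.repr_apply_apply]
    congr 1
    simp [b, OrthonormalBasis.coe_mk]
  have hn : ‖x‖ = ‖b.repr x‖ := (b.repr.norm_map x).symm
  rw [hn, EuclideanSpace.norm_eq, Real.sq_sqrt (Finset.sum_nonneg fun _ _ => sq_nonneg _)]
  exact Finset.sum_congr rfl fun p _ => by rw [hb p]

lemma aux_cs {n : ℕ} (a : Fin n → ℝ) (ha : ∀ k, 0 ≤ a k) (h : ∑ k, a k ^ 2 ≤ 1) :
    ∑ k, a k ≤ Real.sqrt n := by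
  have h1 : (∑ k, a k) ^ 2 ≤ (n : ℝ) * ∑ k, a k ^ 2 := by
    simpa using sq_sum_le_card_mul_sum_sq (s := Finset.univ) (f := a)
  have h2 : (∑ k, a k) ^ 2 ≤ (n : ℝ) :=
    h1.trans (by nlinarith [show (0:ℝ) ≤ (n:ℝ) from Nat.cast_nonneg n])
  calc ∑ k, a k = Real.sqrt ((∑ k, a k) ^ 2) :=
        (Real.sqrt_sq (Finset.sum_nonneg fun k _ => ha k)).symm
    _ ≤ Real.sqrt n := Real.sqrt_le_sqrt h2

-- helper: re ⟪x, -I • A x⟫ = 0 for self-adjoint A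
lemma aux_re_zero {F : Type*} [NormedAddCommGroup F] [InnerProductSpace ℂ F]
    [CompleteSpace F] (A : F →L[ℂ] F) (hA : IsSelfAdjoint A) (x : F) :
    ((inner ℂ x ((-Complex.I) • A x) : ℂ)).re = 0 := by
  rw [inner_smul_right]
  have hz : ((inner ℂ x (A x) : ℂ)).im = 0 := by
    have h1 : (starRingEnd ℂ) (inner ℂ x (A x) : ℂ) = (inner ℂ (A x) x : ℂ) := inner_conj_symm _ _
    have h2 : (inner ℂ (A x) x : ℂ) = (inner ℂ x (A x) : ℂ) := hA.isSymmetric x x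
    exact Complex.conj_eq_iff_im.mp (h1.trans h2)
  simp [Complex.mul_re, hz]


/-- if additionally each terminal state lies in its target subspace
(`ψ_k(T̃) ∈ L_k`), then `T̃ ≥ (1 − Ñ^{−1/2}) √Ñ / E`: the driven Hamiltonian search needs
time of order `(1/E)√(N/ℓ)`. -/
theorem time_lower_bound_for_driven_hamiltonian_search
    (Nt ℓ : ℕ) (hNt : 2 ≤ Nt) (hℓ : 1 ≤ ℓ)
    (w : Fin Nt × Fin ℓ → EuclideanSpace ℂ (Fin (Nt * ℓ)))
    (hw : Orthonormal ℂ w)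
    (hspan : Submodule.span ℂ (Set.range w) = ⊤)
    (L : Fin Nt → Submodule ℂ (EuclideanSpace ℂ (Fin (Nt * ℓ))))
    (hL : ∀ k, L k = Submodule.span ℂ (Set.range fun i : Fin ℓ => w (k, i)))
    (P : Fin Nt → (EuclideanSpace ℂ (Fin (Nt * ℓ)) →L[ℂ] EuclideanSpace ℂ (Fin (Nt * ℓ))))
    (hP : ∀ k, P k = (L k).subtypeL.comp ((L k).orthogonalProjectionOnto))
    (E T : ℝ) (hE : 0 < E) (hT : 0 < T)
    (HD : ℝ → (EuclideanSpace ℂ (Fin (Nt * ℓ)) →L[ℂ] EuclideanSpace ℂ (Fin (Nt * ℓ))))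
    (hHDcont : ContinuousOn HD (Set.Icc 0 T))
    (hHDsa : ∀ t ∈ Set.Icc (0 : ℝ) T, IsSelfAdjoint (HD t))
    (wI : EuclideanSpace ℂ (Fin (Nt * ℓ))) (hwI : ‖wI‖ = 1)
    (ψ : ℝ → EuclideanSpace ℂ (Fin (Nt * ℓ)))
    (ψk : Fin Nt → ℝ → EuclideanSpace ℂ (Fin (Nt * ℓ)))
    (hψ0 : ψ 0 = wI) (hψk0 : ∀ k, ψk k 0 = wI)
    (hψ : ∀ t ∈ Set.Icc (0 : ℝ) T,
      HasDerivAt ψ ((-Complex.I) • HD t (ψ t)) t)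
    (hψk : ∀ k, ∀ t ∈ Set.Icc (0 : ℝ) T,
      HasDerivAt (ψk k) ((-Complex.I) • (((E : ℂ) • P k + HD t) (ψk k t))) t)
    (hterm : ∀ k, ψk k T ∈ L k) :
    (1 - (Real.sqrt Nt)⁻¹) * Real.sqrt Nt / E ≤ T := by
  classical
  have hTmem : (T : ℝ) ∈ Set.Icc (0 : ℝ) T := Set.mem_Icc.2 ⟨hT.le, le_rfl⟩
  -- orthonormality of each block
  have hwk : ∀ k : Fin Nt, Orthonormal ℂ (fun i : Fin ℓ => w (k, i)) := fun k =>
    hw.comp (fun i => (k, i)) (fun i j h => by simpa using congrArg Prod.snd h)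
  -- self-adjointness of P k
  have hPsa : ∀ k, IsSelfAdjoint (P k) := by
    intro k; rw [hP k]; exact isSelfAdjoint_starProjection (L k)
  have hPsym : ∀ k (x y : EuclideanSpace ℂ (Fin (Nt * ℓ))),
      (inner ℂ (P k x) y : ℂ) = inner ℂ x (P k y) := fun k => (hPsa k).isSymmetric
  -- norm-squared of projections
  have hPsq : ∀ k (x : EuclideanSpace ℂ (Fin (Nt * ℓ))),
      ‖P k x‖ ^ 2 = ∑ i, ‖(inner ℂ (w (k, i)) x : ℂ)‖ ^ 2 := by
    intro k x
    rw [hP k]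
    exact aux_proj_norm_sq _ (hwk k) (L k) (hL k) x
  have hPsum : ∀ x : EuclideanSpace ℂ (Fin (Nt * ℓ)),
      ∑ k, ‖P k x‖ ^ 2 = ‖x‖ ^ 2 := by
    intro x
    simp_rw [hPsq]
    rw [← aux_parseval w hw hspan x, Fintype.sum_prod_type]
  -- Cauchy–Schwarz over blocks
  have hsumP : ∀ x : EuclideanSpace ℂ (Fin (Nt * ℓ)), ‖x‖ = 1 →
      ∑ k, ‖P k x‖ ≤ Real.sqrt Nt := by
    intro x hx
    refine aux_cs _ (fun k => norm_nonneg _) ?_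
    rw [hPsum x, hx]; norm_num
  -- norm conservation for ψ
  have hψnorm : ∀ t ∈ Set.Icc (0 : ℝ) T, ‖ψ t‖ = 1 := by
    intro t ht
    have := aux_norm_const ψ (fun t => (-Complex.I) • HD t (ψ t)) hψ
      (fun t ht => aux_re_zero (HD t) (hHDsa t ht) (ψ t)) t ht
    rw [this, hψ0, hwI]
  -- self-adjointness of the driven Hamiltonians
  have hsa2 : ∀ k, ∀ t ∈ Set.Icc (0 : ℝ) T, IsSelfAdjoint ((E : ℂ) • P k + HD t) := by
    intro k t ht
    refine IsSelfAdjoint.add (R := EuclideanSpace ℂ (Fin (Nt * ℓ)) →L[ℂ] EuclideanSpace ℂ (Fin (Nt * ℓ))) ?_ (hHDsa t ht)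
    rw [IsSelfAdjoint, star_smul, (hPsa k).star_eq, Complex.star_def, Complex.conj_ofReal]
  -- norm conservation for ψk
  have hψknorm : ∀ k, ∀ t ∈ Set.Icc (0 : ℝ) T, ‖ψk k t‖ = 1 := by
    intro k t ht
    have := aux_norm_const (ψk k)
      (fun t => (-Complex.I) • (((E : ℂ) • P k + HD t) (ψk k t))) (hψk k)
      (fun t ht => aux_re_zero _ (hsa2 k t ht) (ψk k t)) t ht
    rw [this, hψk0 k, hwI]
  -- derivatives of the overlaps
  have hgderiv : ∀ k, ∀ t ∈ Set.Icc (0 : ℝ) T,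
      HasDerivAt (fun t => (inner ℂ (ψ t) (ψk k t) : ℂ))
        ((-Complex.I * E) * inner ℂ (ψ t) (P k (ψk k t))) t := by
    intro k t ht
    have hd := (hψ t ht).inner ℂ (hψk k t ht)
    have hHsym : (inner ℂ (HD t (ψ t)) (ψk k t) : ℂ) = inner ℂ (ψ t) (HD t (ψk k t)) :=
      (hHDsa t ht).isSymmetric _ _
    have hval : (inner ℂ (ψ t) ((-Complex.I) • (((E : ℂ) • P k + HD t) (ψk k t))) : ℂ)
        + (inner ℂ ((-Complex.I) • HD t (ψ t)) (ψk k t) : ℂ)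
        = (-Complex.I * E) * inner ℂ (ψ t) (P k (ψk k t)) := by
      rw [inner_smul_right, inner_smul_left]
      simp only [ContinuousLinearMap.add_apply, ContinuousLinearMap.smul_apply,
        inner_add_right, inner_smul_right, ← hHsym]
      rw [Complex.conj_neg_I]
      ring
    rw [hval] at hd
    exact hd
  -- package into an ℓ¹-valued curve
  let e : PiLp 1 (fun _ : Fin Nt => ℂ) ≃L[ℂ] (Fin Nt → ℂ) :=
    PiLp.continuousLinearEquiv 1 ℂ (fun _ : Fin Nt => ℂ)
  let F : ℝ → PiLp 1 (fun _ : Fin Nt => ℂ) :=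
    fun t => e.symm (fun k => (inner ℂ (ψ t) (ψk k t) : ℂ))
  let F' : ℝ → PiLp 1 (fun _ : Fin Nt => ℂ) :=
    fun t => e.symm (fun k => (-Complex.I * E) * inner ℂ (ψ t) (P k (ψk k t)))
  have happ : ∀ (v : Fin Nt → ℂ) (k : Fin Nt), (e.symm v) k = v k := fun v k => rfl
  have hFd : ∀ t ∈ Set.Icc (0 : ℝ) T, HasDerivAt F (F' t) t := by
    intro t ht
    have hgd : HasDerivAt (fun t => (fun k => (inner ℂ (ψ t) (ψk k t) : ℂ)))
        (fun k => (-Complex.I * E) * inner ℂ (ψ t) (P k (ψk k t))) t :=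
      hasDerivAt_pi.2 fun k => hgderiv k t ht
    exact ((e.symm.toContinuousLinearMap.restrictScalars ℝ).hasFDerivAt).comp_hasDerivAt t hgd
  -- ℓ¹ norm is the sum of the coordinate norms
  have hl1norm : ∀ x : PiLp 1 (fun _ : Fin Nt => ℂ), ‖x‖ = ∑ k, ‖x k‖ := by
    intro x
    rw [PiLp.norm_eq_sum (p := 1) (by norm_num)]
    simp [ENNReal.toReal_one]
  -- derivative bound
  have hFle : ∀ t ∈ Set.Icc (0 : ℝ) T, ‖F' t‖ ≤ E * Real.sqrt Nt := by
    intro t ht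
    rw [hl1norm]
    have hcomp : ∀ k, ‖(F' t) k‖ ≤ E * ‖P k (ψ t)‖ := by
      intro k
      have h1 : (F' t) k = (-Complex.I * (E : ℂ)) * inner ℂ (ψ t) (P k (ψk k t)) := rfl
      rw [h1, norm_mul]
      have h2 : ‖(-Complex.I * (E : ℂ))‖ = E := by simp [abs_of_pos hE]
      rw [h2, ← hPsym k]
      have h3 : ‖(inner ℂ (P k (ψ t)) (ψk k t) : ℂ)‖ ≤ ‖P k (ψ t)‖ * ‖ψk k t‖ :=
        norm_inner_le_norm _ _
      rw [hψknorm k t ht, mul_one] at h3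
      exact mul_le_mul_of_nonneg_left h3 hE.le
    calc ∑ k, ‖(F' t) k‖ ≤ ∑ k, E * ‖P k (ψ t)‖ := Finset.sum_le_sum fun k _ => hcomp k
      _ = E * ∑ k, ‖P k (ψ t)‖ := by rw [Finset.mul_sum]
      _ ≤ E * Real.sqrt Nt :=
          mul_le_mul_of_nonneg_left (hsumP (ψ t) (hψnorm t ht)) hE.le
  -- mean value inequality
  have hMVT : ‖F T - F 0‖ ≤ (E * Real.sqrt Nt) * T := by
    have := norm_image_sub_le_of_norm_deriv_le_segment'
      (f := F) (f' := F') (a := 0) (b := T) (C := E * Real.sqrt Nt)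
      (fun x hx => (hFd x hx).hasDerivWithinAt)
      (fun x hx => hFle x (Set.mem_Icc.2 ⟨hx.1, hx.2.le⟩))
      T hTmem
    simpa using this
  -- initial overlaps equal 1
  have hg0 : ∀ k, (inner ℂ (ψ 0) (ψk k 0) : ℂ) = 1 := by
    intro k
    rw [hψ0, hψk0 k, inner_self_eq_norm_sq_to_K, hwI]
    norm_num
  -- terminal overlap bound
  have hgT : ∀ k, ‖(inner ℂ (ψ T) (ψk k T) : ℂ)‖ ≤ ‖P k (ψ T)‖ := by
    intro k
    have hfix : P k (ψk k T) = ψk k T := by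
      rw [hP k]
      exact Submodule.starProjection_eq_self_iff.2 (hterm k)
    have h1 : (inner ℂ (ψ T) (ψk k T) : ℂ) = inner ℂ (P k (ψ T)) (ψk k T) := by
      rw [hPsym k, hfix]
    rw [h1]
    have := norm_inner_le_norm (𝕜 := ℂ) (P k (ψ T)) (ψk k T)
    rwa [hψknorm k T hTmem, mul_one] at this
  -- lower bound on the displacement
  have hlow : (Nt : ℝ) - Real.sqrt Nt ≤ ‖F T - F 0‖ := by
    have hFsub : ‖F T - F 0‖ = ∑ k, ‖(inner ℂ (ψ T) (ψk k T) : ℂ) - inner ℂ (ψ 0) (ψk k 0)‖ := by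
      rw [show F T - F 0 = e.symm ((fun k => (inner ℂ (ψ T) (ψk k T) : ℂ))
        - fun k => (inner ℂ (ψ 0) (ψk k 0) : ℂ)) by rw [map_sub], hl1norm]
      rfl
    rw [hFsub]
    have h1 : ∀ k, 1 - ‖(inner ℂ (ψ T) (ψk k T) : ℂ)‖
        ≤ ‖(inner ℂ (ψ T) (ψk k T) : ℂ) - inner ℂ (ψ 0) (ψk k 0)‖ := by
      intro k
      rw [hg0 k]
      calc (1 : ℝ) - ‖(inner ℂ (ψ T) (ψk k T) : ℂ)‖
          = ‖(1 : ℂ)‖ - ‖(inner ℂ (ψ T) (ψk k T) : ℂ)‖ := by norm_num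
        _ ≤ ‖(1 : ℂ) - inner ℂ (ψ T) (ψk k T)‖ := norm_sub_norm_le _ _
        _ = ‖(inner ℂ (ψ T) (ψk k T) : ℂ) - 1‖ := norm_sub_rev _ _
    have h2 := Finset.sum_le_sum (fun k (_ : k ∈ Finset.univ) => h1 k)
    have h3 : ∑ k : Fin Nt, (1 - ‖(inner ℂ (ψ T) (ψk k T) : ℂ)‖)
        = (Nt : ℝ) - ∑ k, ‖(inner ℂ (ψ T) (ψk k T) : ℂ)‖ := by
      rw [Finset.sum_sub_distrib]
      simp
    have h4 : ∑ k, ‖(inner ℂ (ψ T) (ψk k T) : ℂ)‖ ≤ Real.sqrt Nt :=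
      calc ∑ k, ‖(inner ℂ (ψ T) (ψk k T) : ℂ)‖ ≤ ∑ k, ‖P k (ψ T)‖ :=
            Finset.sum_le_sum fun k _ => hgT k
        _ ≤ Real.sqrt Nt := hsumP (ψ T) (hψnorm T hTmem)
    linarith [h2, h3, h4]
  -- conclude
  have hkey : (Nt : ℝ) - Real.sqrt Nt ≤ (E * Real.sqrt Nt) * T := le_trans hlow hMVT
  have hs1 : (1 : ℝ) ≤ Real.sqrt Nt := by
    rw [show (1 : ℝ) = Real.sqrt 1 by simp]
    exact Real.sqrt_le_sqrt (by exact_mod_cast le_trans one_le_two hNt)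
  have hs0 : (0 : ℝ) < Real.sqrt Nt := lt_of_lt_of_le one_pos hs1
  have hss : Real.sqrt Nt * Real.sqrt Nt = (Nt : ℝ) :=
    Real.mul_self_sqrt (Nat.cast_nonneg _)
  rw [div_le_iff₀ hE]
  have hexp : (1 - (Real.sqrt Nt)⁻¹) * Real.sqrt Nt = Real.sqrt Nt - 1 := by
    field_simp
  rw [hexp]
  nlinarith [hkey, hss, hs0, hE, hT]
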